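/- Let n be an odd positive integer and let h, k be nonnegative integers. Then, in ℤ[q], D_q(h+n, k+n) ≡ D_q(h+n, k) + D_q(h, k+n) + D_q(h, k) (mod Φ_n(q)). -/

import Mathlib

open Polynomial Finset

/-- The Gaussian (q-)binomial coefficient `[h choose k]_q` as a polynomial in `ℤ[q]`,
defined via the q-Pascal recurrence; it equals
`([h]_q [h−1]_q ⋯ [h−k+1]_q)/([k]_q ⋯ [1]_q)`. -/
noncomputable def qBinom : ℕ → ℕ → Polynomial ℤ
  | _, 0 => 1
  | 0, _ + 1 => 0
  | h + 1, k + 1 => qBinom h k + Polynomial.X ^ (k + 1) * qBinom h (k + 1)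

/-- The q-Delannoy number `D_q(h,k) = Σ_{j=0}^{h} q^{binom(j+1,2)} [k choose j]_q
[h+k−j choose k]_q`. -/
noncomputable def qDelannoy (h k : ℕ) : Polynomial ℤ :=
  ∑ j ∈ Finset.range (h + 1),
    Polynomial.X ^ ((j + 1).choose 2) * qBinom k j * qBinom (h + k - j) k

/-- The Delannoy number `D(h,k) = Σ_{j=0}^{h} binom(k,j) binom(h+k−j,k)`. -/
def delannoy (h k : ℕ) : ℕ :=
  ∑ j ∈ Finset.range (h + 1), k.choose j * (h + k - j).choose k

lemma qBinom_zero (h : ℕ) : qBinom h 0 = 1 := by cases h <;> rfl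

lemma qBinom_zero_succ (k : ℕ) : qBinom 0 (k + 1) = 0 := rfl

lemma qBinom_succ (h k : ℕ) :
    qBinom (h + 1) (k + 1) = qBinom h k + X ^ (k + 1) * qBinom h (k + 1) := rfl

lemma qBinom_eq_zero : ∀ {h k : ℕ}, h < k → qBinom h k = 0
  | 0, _ + 1, _ => rfl
  | h + 1, k + 1, hlt => by
      rw [qBinom_succ, qBinom_eq_zero (by omega), qBinom_eq_zero (by omega)]
      ring

lemma qBinom_self : ∀ h : ℕ, qBinom h h = 1
  | 0 => rfl
  | h + 1 => by
      rw [qBinom_succ, qBinom_self h, qBinom_eq_zero (by omega)]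
      ring

lemma qBinom_one_geom : ∀ a : ℕ, (X - 1) * qBinom (a + 1) 1 = X ^ (a + 1) - 1
  | 0 => by
      show (X - 1) * qBinom 1 1 = _
      rw [qBinom_self]; ring
  | a + 1 => by
      have : qBinom (a + 2) 1 = 1 + X * qBinom (a + 1) 1 := by
        rw [qBinom_succ, qBinom_zero]; ring
      rw [this]
      have ih := qBinom_one_geom a
      linear_combination X * ih

lemma qBinom_pascal2 : ∀ a b : ℕ,
    qBinom (a + 1) (b + 1) = X ^ (a - b) * qBinom a b + qBinom a (b + 1)
  | 0, b => by
      cases b with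
      | zero => simp [qBinom_self, qBinom_eq_zero]
      | succ c =>
          rw [qBinom_eq_zero (show 0 + 1 < c + 1 + 1 by omega), qBinom_zero_succ,
            qBinom_zero_succ]
          ring
  | a + 1, 0 => by
      have h1 : qBinom (a + 2) 1 = 1 + X * qBinom (a + 1) 1 := by
        rw [qBinom_succ, qBinom_zero]; ring
      rw [h1, qBinom_zero, Nat.sub_zero]
      have := qBinom_one_geom a
      linear_combination this
  | a + 1, c + 1 => by
      rcases lt_or_ge c a with hca | hca
      · have hL := qBinom_succ (a + 1) (c + 1)
        have p1 := qBinom_pascal2 a c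
        have p2 := qBinom_pascal2 a (c + 1)
        have d1 := qBinom_succ a c
        have d2 := qBinom_succ a (c + 1)
        have e1 : (X : Polynomial ℤ) ^ (c + 1 + 1) * X ^ (a - (c + 1)) = X ^ (a + 1) := by
          rw [← pow_add]; congr 1; omega
        have e2 : (X : Polynomial ℤ) ^ (a - c) * X ^ (c + 1) = X ^ (a + 1) := by
          rw [← pow_add]; congr 1; omega
        have e3 : a + 1 - (c + 1) = a - c := by omega
        rw [e3]
        linear_combination hL + p1 - X ^ (a - c) * d1 + X ^ (c + 1 + 1) * p2 - d2 +
          qBinom a (c + 1) * e1 - qBinom a (c + 1) * e2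
      · rcases Nat.eq_or_lt_of_le hca with rfl | hlt
        · rw [qBinom_self, qBinom_self, qBinom_eq_zero (show a + 1 < a + 1 + 1 by omega)]
          simp
        · rw [qBinom_eq_zero (show a + 1 + 1 < c + 1 + 1 by omega),
            qBinom_eq_zero (show a + 1 < c + 1 + 1 by omega),
            qBinom_eq_zero (show a + 1 < c + 1 by omega)]
          ring

lemma qBinom_mul (a b : ℕ) :
    (1 - X ^ (b + 1)) * qBinom (a + 1) (b + 1) = (1 - X ^ (a + 1)) * qBinom a b := by
  rcases le_or_gt b a with hba | hba
  · have hx : (X : Polynomial ℤ) ^ (b + 1) * X ^ (a - b) = X ^ (a + 1) := by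
      rw [← pow_add]; congr 1; omega
    have h1 := qBinom_succ a b
    have h2 := qBinom_pascal2 a b
    calc (1 - X ^ (b + 1)) * qBinom (a + 1) (b + 1)
        = qBinom (a + 1) (b + 1) - X ^ (b+1) * qBinom (a + 1) (b + 1) := by ring
      _ = (qBinom a b + X ^ (b + 1) * qBinom a (b + 1))
          - X ^ (b+1) * (X ^ (a - b) * qBinom a b + qBinom a (b + 1)) := by rw [← h1, ← h2]
      _ = (1 - X ^ (a + 1)) * qBinom a b := by
          rw [show X ^ (b+1) * (X ^ (a - b) * qBinom a b + qBinom a (b + 1))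
              = X ^ (b+1) * X ^ (a-b) * qBinom a b + X ^ (b+1) * qBinom a (b+1) by ring, hx]
          ring
  · rw [qBinom_eq_zero hba, qBinom_eq_zero (by omega : a + 1 < b + 1)]
    ring

lemma cyclotomic_not_dvd_one_sub_X_pow {n b : ℕ} (hb : 0 < b) (hbn : b < n) :
    ¬ cyclotomic n ℤ ∣ (1 - X ^ b : Polynomial ℤ) := by
  intro hdvd
  have hn0 : n ≠ 0 := by omega
  have hζ := Complex.isPrimitiveRoot_exp n hn0
  obtain ⟨c, hc⟩ := hdvd
  have := congrArg (fun p => Polynomial.aeval (Complex.exp (2 * Real.pi * Complex.I / n)) p) hc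
  simp only [map_mul, map_sub, map_one, map_pow, aeval_X] at this
  have hroot : Polynomial.aeval (Complex.exp (2 * Real.pi * Complex.I / n)) (cyclotomic n ℤ) = 0 := by
    rw [aeval_def, ← Polynomial.eval_map, algebraMap_int_eq, map_cyclotomic_int]
    exact hζ.isRoot_cyclotomic (by omega)
  rw [hroot, zero_mul] at this
  exact hζ.pow_ne_one_of_pos_of_lt hb.ne' hbn (by linear_combination -this)

lemma cyclotomic_dvd_qBinom {n b : ℕ} (hb : 0 < b) (hbn : b < n) :
    cyclotomic n ℤ ∣ qBinom n b := by
  have hn : 0 < n := by omega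
  obtain ⟨m, rfl⟩ : ∃ m, n = m + 1 := ⟨n - 1, by omega⟩
  obtain ⟨c, rfl⟩ : ∃ c, b = c + 1 := ⟨b - 1, by omega⟩
  have hprime : Prime (cyclotomic (m + 1) ℤ) :=
    (UniqueFactorizationMonoid.irreducible_iff_prime).mp (cyclotomic.irreducible hn)
  have hdvd : cyclotomic (m + 1) ℤ ∣ (1 - X ^ (c + 1)) * qBinom (m + 1) (c + 1) := by
    rw [qBinom_mul m c]
    have h := cyclotomic.dvd_X_pow_sub_one (m + 1) ℤ
    exact (by simpa [neg_sub] using dvd_neg.mpr h :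
      cyclotomic (m + 1) ℤ ∣ (1 - X ^ (m + 1) : Polynomial ℤ)).mul_right _
  rcases hprime.dvd_or_dvd hdvd with h | h
  · exact absurd h (cyclotomic_not_dvd_one_sub_X_pow hb hbn)
  · exact h

lemma choose_two_step (m : ℕ) : (m + 1).choose 2 = m + m.choose 2 := by
  rw [Nat.choose_succ_succ, Nat.choose_one_right]

lemma choose_two_base (s : ℕ) : (2 * s + 2).choose 2 = (2 * s + 1) * (s + 1) := by
  induction s with
  | zero => rfl
  | succ s ih =>
      have h1 : 2 * (s + 1) + 2 = (2 * s + 2) + 1 + 1 := by omega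
      rw [h1, choose_two_step, choose_two_step, ih]
      ring

lemma choose_two_periodic (s i : ℕ) :
    (2 * s + 1 + i + 1).choose 2 = (i + 1).choose 2 + (2 * s + 1) * (s + i + 1) := by
  induction i with
  | zero =>
      have h : 2 * s + 1 + 0 + 1 = 2 * s + 2 := by omega
      rw [h, choose_two_base, Nat.choose_eq_zero_of_lt (show 0 + 1 < 2 by omega)]
      ring
  | succ i ih =>
      have h1 : 2 * s + 1 + (i + 1) + 1 = (2 * s + 1 + i + 1) + 1 := by omega
      rw [h1, choose_two_step (2 * s + 1 + i + 1), choose_two_step (i + 1), ih]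
      ring

noncomputable def mkq (n : ℕ) :
    Polynomial ℤ →+* Polynomial ℤ ⧸ Ideal.span {Polynomial.cyclotomic n ℤ} :=
  Ideal.Quotient.mk _

lemma mkq_eq_zero (n : ℕ) {p : Polynomial ℤ} (h : cyclotomic n ℤ ∣ p) : mkq n p = 0 :=
  Ideal.Quotient.eq_zero_iff_mem.mpr (Ideal.mem_span_singleton.mpr h)

lemma mkq_X_pow (n : ℕ) : (mkq n X) ^ n = 1 := by
  have h0 : mkq n (X ^ n - 1) = 0 := mkq_eq_zero n (cyclotomic.dvd_X_pow_sub_one n ℤ)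
  have h1 : mkq n (X ^ n) - mkq n 1 = 0 := by rw [← map_sub]; exact h0
  have h2 := sub_eq_zero.mp h1
  simpa using h2

lemma mkq_t (n : ℕ) (hodd : Odd n) (i : ℕ) :
    (mkq n X) ^ ((n + i + 1).choose 2) = (mkq n X) ^ ((i + 1).choose 2) := by
  obtain ⟨s, rfl⟩ : ∃ s, n = 2 * s + 1 := by
    obtain ⟨s, hs⟩ := hodd; exact ⟨s, by omega⟩
  rw [choose_two_periodic, pow_add, pow_mul, mkq_X_pow, one_pow, mul_one]

lemma mkq_L2 (n : ℕ) (hn : 0 < n) :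
    ∀ (a b : ℕ), b < n → mkq n (qBinom (a + n) b) = mkq n (qBinom a b) := by
  intro a
  induction a with
  | zero =>
      intro b hb
      cases b with
      | zero => simp [qBinom_zero]
      | succ c =>
          rw [zero_add, qBinom_zero_succ, map_zero]
          exact mkq_eq_zero n (cyclotomic_dvd_qBinom (by omega) hb)
  | succ a ih =>
      intro b hb
      cases b with
      | zero => simp [qBinom_zero]
      | succ c =>
          rw [show a + 1 + n = (a + n) + 1 by omega, qBinom_succ, qBinom_succ,
            map_add, map_add, map_mul, map_mul, ih c (by omega), ih (c + 1) hb]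

lemma mkq_L1 (n : ℕ) (hn : 0 < n) : ∀ (a b : ℕ),
    mkq n (qBinom (a + n) (b + n)) = mkq n (qBinom a (b + n)) + mkq n (qBinom a b) := by
  obtain ⟨m, rfl⟩ : ∃ m, n = m + 1 := ⟨n - 1, by omega⟩
  intro a
  induction a with
  | zero =>
      intro b
      cases b with
      | zero => simp [qBinom_self, qBinom_zero, qBinom_eq_zero hn]
      | succ c =>
          rw [zero_add, qBinom_eq_zero (show m + 1 < c + 1 + (m + 1) by omega),
            qBinom_eq_zero (show 0 < c + 1 + (m + 1) by omega),
            qBinom_eq_zero (show 0 < c + 1 by omega)]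
          simp
  | succ a ih =>
      intro b
      have hx := mkq_X_pow (m + 1)
      cases b with
      | zero =>
          have e1 : a + 1 + (m + 1) = (a + (m + 1)) + 1 := by omega
          rw [e1, zero_add, qBinom_succ, qBinom_succ]
          simp only [map_add, map_mul, map_pow]
          rw [mkq_L2 (m + 1) hn a m (show m < m + 1 by omega)]
          have h2 := ih 0
          rw [zero_add] at h2
          rw [h2, qBinom_zero a, qBinom_zero (a + 1), map_one, hx]
          ring
      | succ c =>
          have e1 : a + 1 + (m + 1) = (a + (m + 1)) + 1 := by omega
          have e2 : c + 1 + (m + 1) = (c + (m + 1)) + 1 := by omega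
          rw [e1, e2, qBinom_succ, qBinom_succ, qBinom_succ]
          simp only [map_add, map_mul, map_pow]
          have h1 := ih c
          have h2 := ih (c + 1)
          rw [show c + 1 + (m + 1) = (c + (m + 1)) + 1 by omega] at h2
          have hxe : (mkq (m + 1) X) ^ (c + (m + 1) + 1) = (mkq (m + 1) X) ^ (c + 1) := by
            rw [show c + (m + 1) + 1 = (c + 1) + (m + 1) by omega, pow_add, hx, mul_one]
          rw [h1, h2, hxe]
          ring

noncomputable def qDT (n h k j : ℕ) :
    Polynomial ℤ ⧸ Ideal.span {Polynomial.cyclotomic n ℤ} :=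
  (mkq n X) ^ ((j + 1).choose 2) * mkq n (qBinom k j) * mkq n (qBinom (h + k - j) k)

lemma mkq_qDelannoy (n h k : ℕ) :
    mkq n (qDelannoy h k) = ∑ j ∈ range (h + 1), qDT n h k j := by
  unfold qDelannoy qDT
  rw [map_sum]
  simp [map_mul, map_pow]

lemma qDT_zero (n : ℕ) {h k j : ℕ} (hj : h < j) : qDT n h k j = 0 := by
  unfold qDT
  rcases Nat.eq_zero_or_pos k with rfl | hk
  · rw [qBinom_eq_zero (show 0 < j by omega), map_zero]; ring
  · rw [qBinom_eq_zero (show h + k - j < k by omega), map_zero]; ring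

lemma sum_qDT (n h k N : ℕ) (hN : h + 1 ≤ N) :
    ∑ j ∈ range N, qDT n h k j = mkq n (qDelannoy h k) := by
  rw [mkq_qDelannoy]
  symm
  apply Finset.sum_subset (range_subset_range.mpr hN)
  intro j _ hj
  exact qDT_zero n (by simp [mem_range] at hj; omega)

lemma qDT_lt (n : ℕ) (hn : 0 < n) (h k : ℕ) {j : ℕ} (hj : j < n) :
    qDT n (h + n) (k + n) j = qDT n h (k + n) j + qDT n (h + n) k j := by
  unfold qDT
  have e1 : h + n + (k + n) - j = (h + (k + n) - j) + n := by omega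
  have e2 : h + n + k - j = h + (k + n) - j := by omega
  rw [e1, e2, mkq_L1 n hn (h + (k + n) - j) k, mkq_L2 n hn k j hj]
  ring

lemma qDT_ge (n : ℕ) (hn : 0 < n) (hodd : Odd n) (h k : ℕ) {i : ℕ} (hi : i ≤ h) :
    qDT n (h + n) (k + n) (n + i) =
      qDT n h (k + n) (n + i) + qDT n (h + n) k (n + i) + qDT n h k i := by
  unfold qDT
  have e1 : h + n + (k + n) - (n + i) = (h + k - i) + n := by omega
  have e2 : h + (k + n) - (n + i) = h + k - i := by omega
  have e3 : h + n + k - (n + i) = h + k - i := by omega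
  rw [e1, e2, e3, mkq_t n hodd i, show n + i = i + n by omega,
    mkq_L1 n hn (h + k - i) k, mkq_L1 n hn k i]
  ring

theorem qDelannoy_step_odd (n : ℕ) (hn : 0 < n) (hodd : Odd n) (h k : ℕ) :
    Polynomial.cyclotomic n ℤ ∣
      qDelannoy (h + n) (k + n) -
        (qDelannoy (h + n) k + qDelannoy h (k + n) + qDelannoy h k) := by
  rw [← Ideal.mem_span_singleton, ← Ideal.Quotient.eq_zero_iff_mem]
  show mkq n _ = 0
  rw [map_sub, sub_eq_zero, map_add, map_add]
  rw [← sum_qDT n (h + n) (k + n) (h + n + 1) (le_refl _),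
    ← sum_qDT n (h + n) k (n + (h + 1)) (by omega),
    ← sum_qDT n h (k + n) (n + (h + 1)) (by omega),
    ← sum_qDT n h k (h + 1) (le_refl _)]
  rw [show h + n + 1 = n + (h + 1) by omega,
    Finset.sum_range_add (fun j => qDT n (h + n) (k + n) j) n (h + 1),
    Finset.sum_range_add (fun j => qDT n (h + n) k j) n (h + 1),
    Finset.sum_range_add (fun j => qDT n h (k + n) j) n (h + 1)]
  have hA : ∑ j ∈ range n, qDT n (h + n) (k + n) j
      = ∑ j ∈ range n, (qDT n h (k + n) j + qDT n (h + n) k j) :=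
    Finset.sum_congr rfl fun j hj => qDT_lt n hn h k (mem_range.mp hj)
  have hB : ∑ i ∈ range (h + 1), qDT n (h + n) (k + n) (n + i)
      = ∑ i ∈ range (h + 1),
          (qDT n h (k + n) (n + i) + qDT n (h + n) k (n + i) + qDT n h k i) :=
    Finset.sum_congr rfl fun i hi => qDT_ge n hn hodd h k (by
      have := mem_range.mp hi; omega)
  rw [hA, hB, Finset.sum_add_distrib, Finset.sum_add_distrib, Finset.sum_add_distrib]
  ring
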